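/- arXiv:1711.06783 — 2 statements merged into one kernel-verified Lean document; each statement's English description precedes it below -/
import Mathlib

section
/- Let S be a finite set and τ a permutation of S, and for each ℓ ≥ 1 let t_ℓ be the number of cycles of length ℓ in the cycle decomposition of τ. Then Σ_ℓ ℓ·t_ℓ = |S|, and for every 2×2 matrix w of positive reals and every real z > 0, A_{S,τ}(w, z) = Π_{ℓ ≥ 1} a_ℓ(w, z)^{t_ℓ}. -/
open Finset

/-- Unordered pairs of distinct vertices of `[n]`. -/
abbrev VPairs (n : ℕ) := {e : Sym2 (Fin n) // ¬ e.IsDiag}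

/-- A graph on `[n]`, identified with its edge-indicator function. -/
abbrev PairGraph (n : ℕ) := VPairs n → Bool

/-- The permutation of vertex pairs induced by a permutation of vertices. -/
def pairPerm {n : ℕ} (π : Equiv.Perm (Fin n)) : Equiv.Perm (VPairs n) where
  toFun e := ⟨e.val.map π, fun h => e.prop ((Sym2.isDiag_map π.injective).mp h)⟩
  invFun e := ⟨e.val.map π.symm, fun h => e.prop ((Sym2.isDiag_map π.symm.injective).mp h)⟩
  left_inv e := by
    ext1
    simp [Sym2.map_map]
  right_inv e := by
    ext1
    simp [Sym2.map_map]

/-- Hamming distance between two labelings. -/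
def hamming {S : Type*} [Fintype S] [DecidableEq S] (f g : S → Bool) : ℕ :=
  (Finset.univ.filter fun e => f e ≠ g e).card

/-- `δ(τ; f, g) = (Δ(f∘τ, g) − Δ(f, g))/2`, as a rational number. -/
def deltaQ {S : Type*} [Fintype S] [DecidableEq S] (τ : Equiv.Perm S) (f g : S → Bool) : ℚ :=
  (((hamming (f ∘ τ) g : ℚ)) - (hamming f g : ℚ)) / 2

/-- The entry `(i,j)` of the type `μ(f,g)`. -/
def typeCount {S : Type*} [Fintype S] [DecidableEq S] (f g : S → Bool) (i j : Bool) : ℕ :=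
  (Finset.univ.filter fun e => f e = i ∧ g e = j).card

/-- The joint edge distribution determined by a probability vector. -/
def pv (p11 p10 p01 p00 : ℝ) : Bool → Bool → ℝ :=
  fun a b => if a then (if b then p11 else p10) else (if b then p01 else p00)

open Classical in
/-- The probability of an event under the correlated Erdős–Rényi model `ER(n,p)`. -/
noncomputable def ERprob (n : ℕ) (p : Bool → Bool → ℝ)
    (E : PairGraph n × PairGraph n → Prop) : ℝ :=
  ∑ gab : PairGraph n × PairGraph n,
    (if E gab then (1 : ℝ) else 0) * ∏ e : VPairs n, p (gab.1 e) (gab.2 e)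

open Classical in
/-- The probability of an event under the joint distribution of a uniformly random
permutation `Π` of `[n]` together with `(G_a, G_b) ~ ER(n,p)` independent of it. -/
noncomputable def ERPermProb (n : ℕ) (p : Bool → Bool → ℝ)
    (E : Equiv.Perm (Fin n) → PairGraph n × PairGraph n → Prop) : ℝ :=
  (∑ π : Equiv.Perm (Fin n), ∑ gab : PairGraph n × PairGraph n,
    (if E π gab then (1 : ℝ) else 0) * ∏ e : VPairs n, p (gab.1 e) (gab.2 e))
    / (Nat.factorial n)

/-- The anonymized graph `G_c`, determined by `G_c(l(Π)(e)) = G_a(e)`. -/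
def anonymize {n : ℕ} (π : Equiv.Perm (Fin n)) (ga : PairGraph n) : PairGraph n :=
  fun e => ga ((pairPerm π).symm e)

/-- `S_{n,nt}`: the permutations of `[n]` with exactly `nt` non-fixed points. -/
def Snn (n nt : ℕ) : Finset (Equiv.Perm (Fin n)) :=
  Finset.univ.filter fun π => (Finset.univ.filter fun x => π x ≠ x).card = nt

open Classical in
/-- The generating function `A_{S,τ}(w,z)`; here `z^δ` is expressed as `√z^(2δ)`. -/
noncomputable def AgF {S : Type*} [Fintype S] (τ : Equiv.Perm S)
    (w : Bool → Bool → ℝ) (z : ℝ) : ℝ :=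
  ∑ g : S → Bool, ∑ h : S → Bool,
    (Real.sqrt z) ^ ((hamming (g ∘ τ) h : ℤ) - (hamming g h : ℤ)) *
      ∏ i : Bool, ∏ j : Bool, w i j ^ typeCount g h i j

/-- `a_ℓ(w,z)`: the generating function of a single cycle of length `ℓ`. -/
noncomputable def aGF (ℓ : ℕ) (w : Bool → Bool → ℝ) (z : ℝ) : ℝ :=
  AgF (finRotate ℓ) w z

open Classical in
/-- The number of cycles of length `ℓ` in the cycle decomposition of `τ`
(the number of points whose `τ`-orbit has size `ℓ`, divided by `ℓ`). -/
noncomputable def cycleCount {S : Type*} [Fintype S] (τ : Equiv.Perm S) (ℓ : ℕ) : ℕ :=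
  (Finset.univ.filter fun x : S =>
    (Finset.univ.filter fun y : S => τ.SameCycle x y).card = ℓ).card / ℓ

open Classical in
/-- The probability of an event under an Erdős–Rényi graph `G(n,p)`. -/
noncomputable def ERgraphProb (n : ℕ) (p : ℝ) (E : PairGraph n → Prop) : ℝ :=
  ∑ g : PairGraph n,
    (if E g then (1 : ℝ) else 0) * ∏ e : VPairs n, (if g e then p else 1 - p)

open Classical in
/-- The number of automorphisms of a graph. -/
noncomputable def autCard {n : ℕ} (g : PairGraph n) : ℕ :=
  (Finset.univ.filter fun π : Equiv.Perm (Fin n) =>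
    ∀ e : VPairs n, g (pairPerm π e) = g e).card

section lemmas
variable {S T : Type*} [Fintype S] [Fintype T]

lemma hamming_eq_sum [DecidableEq S] (f g : S → Bool) :
    hamming f g = ∑ x : S, (if f x ≠ g x then 1 else 0) := by
  rw [hamming, Finset.card_filter]

lemma typeCount_eq_sum [DecidableEq S] (f g : S → Bool) (i j : Bool) :
    typeCount f g i j = ∑ x : S, (if f x = i ∧ g x = j then 1 else 0) := by
  rw [typeCount, Finset.card_filter]

lemma hamming_comp [DecidableEq S] [DecidableEq T] (e : T ≃ S) (f g : S → Bool) :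
    hamming (f ∘ e) (g ∘ e) = hamming f g := by
  rw [hamming_eq_sum, hamming_eq_sum]
  exact Fintype.sum_equiv e _ _ (fun x => by simp)

lemma typeCount_comp [DecidableEq S] [DecidableEq T] (e : T ≃ S) (f g : S → Bool) (i j : Bool) :
    typeCount (f ∘ e) (g ∘ e) i j = typeCount f g i j := by
  rw [typeCount_eq_sum, typeCount_eq_sum]
  exact Fintype.sum_equiv e _ _ (fun x => by simp)

lemma hamming_sum [DecidableEq S] [DecidableEq T] [DecidableEq (S ⊕ T)] (f g : S ⊕ T → Bool) :
    hamming f g = hamming (f ∘ Sum.inl) (g ∘ Sum.inl) + hamming (f ∘ Sum.inr) (g ∘ Sum.inr) := by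
  rw [hamming_eq_sum, hamming_eq_sum, hamming_eq_sum, Fintype.sum_sum_type]
  rfl

lemma typeCount_sum [DecidableEq S] [DecidableEq T] [DecidableEq (S ⊕ T)]
    (f g : S ⊕ T → Bool) (i j : Bool) :
    typeCount f g i j
      = typeCount (f ∘ Sum.inl) (g ∘ Sum.inl) i j + typeCount (f ∘ Sum.inr) (g ∘ Sum.inr) i j := by
  rw [typeCount_eq_sum, typeCount_eq_sum, typeCount_eq_sum, Fintype.sum_sum_type]
  rfl

lemma AgF_conj (e : T ≃ S) (τ : Equiv.Perm S) (w : Bool → Bool → ℝ) (z : ℝ) :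
    AgF (e.trans (Equiv.trans (τ : S ≃ S) e.symm)) w z = AgF τ w z := by
  classical
  unfold AgF
  have E : (T → Bool) ≃ (S → Bool) := Equiv.arrowCongr e (Equiv.refl Bool)
  refine Fintype.sum_equiv (Equiv.arrowCongr e (Equiv.refl Bool)) _ _ (fun g => ?_)
  refine Fintype.sum_equiv (Equiv.arrowCongr e (Equiv.refl Bool)) _ _ (fun h => ?_)
  have hge : ∀ g : T → Bool, (Equiv.arrowCongr e (Equiv.refl Bool)) g = g ∘ e.symm := fun _ => rfl
  rw [hge, hge]
  have h1 : (g ∘ e.symm) ∘ τ = (g ∘ (e.trans (Equiv.trans (τ : S ≃ S) e.symm))) ∘ e.symm := by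
    funext t; simp [Equiv.trans]
  have h2 : hamming ((g ∘ (e.trans (Equiv.trans (τ : S ≃ S) e.symm))) ∘ e.symm) (h ∘ e.symm)
      = hamming (g ∘ (e.trans (Equiv.trans (τ : S ≃ S) e.symm))) h := by
    have := hamming_comp (S := T) (T := S) e.symm
      (g ∘ (e.trans (Equiv.trans (τ : S ≃ S) e.symm))) h
    exact this
  have h3 : hamming (g ∘ e.symm) (h ∘ e.symm) = hamming g h :=
    hamming_comp e.symm g h
  have h4 : ∀ i j, typeCount (g ∘ e.symm) (h ∘ e.symm) i j = typeCount g h i j :=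
    fun i j => typeCount_comp e.symm g h i j
  rw [h1, h2, h3]
  congr 1
  refine Finset.prod_congr rfl fun i _ => Finset.prod_congr rfl fun j _ => ?_
  rw [h4]



lemma sum_sum_split [Fintype (S ⊕ T → Bool)] [Fintype (S → Bool)] [Fintype (T → Bool)] (F : (S ⊕ T → Bool) → (S ⊕ T → Bool) → ℝ)
    (A : (S → Bool) → (S → Bool) → ℝ) (B : (T → Bool) → (T → Bool) → ℝ)
    (hkey : ∀ g₁ h₁ g₂ h₂, F (Sum.elim g₁ g₂) (Sum.elim h₁ h₂) = A g₁ h₁ * B g₂ h₂) :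
    (∑ g : S ⊕ T → Bool, ∑ h : S ⊕ T → Bool, F g h)
      = (∑ g : S → Bool, ∑ h : S → Bool, A g h) * (∑ g : T → Bool, ∑ h : T → Bool, B g h) := by
  classical
  let E := (Equiv.sumArrowEquivProdArrow S T Bool).symm
  have hEapp : ∀ p : (S → Bool) × (T → Bool), E p = Sum.elim p.1 p.2 := fun _ => rfl
  rw [← Equiv.sum_comp E (fun g => ∑ h : S ⊕ T → Bool, F g h)]
  have inner : ∀ p : (S → Bool) × (T → Bool),
      (∑ h : S ⊕ T → Bool, F (E p) h) = (∑ h : S → Bool, A p.1 h) * (∑ h : T → Bool, B p.2 h) := by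
    intro p
    rw [← Equiv.sum_comp E (fun h => F (E p) h)]
    have : ∀ q : (S → Bool) × (T → Bool), F (E p) (E q) = A p.1 q.1 * B p.2 q.2 := by
      intro q; rw [hEapp, hEapp]; exact hkey p.1 q.1 p.2 q.2
    rw [Finset.sum_congr rfl fun q _ => this q, Fintype.sum_prod_type, ← Finset.sum_mul_sum]
  rw [Finset.sum_congr rfl fun p _ => inner p, Fintype.sum_prod_type]
  dsimp only
  rw [← Finset.sum_mul_sum]

set_option maxHeartbeats 2000000 in
lemma AgF_sumCongr (τ₁ : Equiv.Perm S) (τ₂ : Equiv.Perm T)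
    (w : Bool → Bool → ℝ) (z : ℝ) (hz : 0 < z) :
    AgF (Equiv.sumCongr τ₁ τ₂) w z = AgF τ₁ w z * AgF τ₂ w z := by
  have hc : Real.sqrt z ≠ 0 := by positivity
  unfold AgF
  apply @sum_sum_split S T _ _
    (@Pi.instFintype _ _ (fun a b => Classical.propDecidable _) _ _)
    (@Pi.instFintype _ _ (fun a b => Classical.propDecidable _) _ _)
    (@Pi.instFintype _ _ (fun a b => Classical.propDecidable _) _ _)
  intro g₁ h₁ g₂ h₂
  have zsplit : ∀ a b cc d : ℕ, (Real.sqrt z) ^ (((a + b : ℕ) : ℤ) - ((cc + d : ℕ) : ℤ))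
      = (Real.sqrt z) ^ ((a : ℤ) - cc) * (Real.sqrt z) ^ ((b : ℤ) - d) := by
    intro a b cc d
    rw [← zpow_add₀ hc]
    congr 1
    push_cast
    ring
  have tsplit : ∀ t₁ t₂ : Bool → Bool → ℕ,
      (∏ i : Bool, ∏ j : Bool, w i j ^ (t₁ i j + t₂ i j))
      = (∏ i : Bool, ∏ j : Bool, w i j ^ t₁ i j) * (∏ i : Bool, ∏ j : Bool, w i j ^ t₂ i j) := by
    intro t₁ t₂
    rw [← Finset.prod_mul_distrib]
    refine Finset.prod_congr rfl fun i _ => ?_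
    rw [← Finset.prod_mul_distrib]
    exact Finset.prod_congr rfl fun j _ => pow_add _ _ _
  have c1 : (Sum.elim g₁ g₂ ∘ (Equiv.sumCongr τ₁ τ₂)) ∘ Sum.inl = g₁ ∘ τ₁ := rfl
  have c2 : (Sum.elim g₁ g₂ ∘ (Equiv.sumCongr τ₁ τ₂)) ∘ Sum.inr = g₂ ∘ τ₂ := rfl
  have c3 : Sum.elim g₁ g₂ ∘ Sum.inl = g₁ := rfl
  have c4 : Sum.elim g₁ g₂ ∘ Sum.inr = g₂ := rfl
  have c5 : Sum.elim h₁ h₂ ∘ Sum.inl = h₁ := rfl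
  have c6 : Sum.elim h₁ h₂ ∘ Sum.inr = h₂ := rfl
  rw [@hamming_sum S T _ _ (fun a b => Classical.propDecidable _) (fun a b => Classical.propDecidable _) (fun a b => Classical.propDecidable _),
      @hamming_sum S T _ _ (fun a b => Classical.propDecidable _) (fun a b => Classical.propDecidable _) (fun a b => Classical.propDecidable _), c1, c2, c3, c4, c5, c6, zsplit]
  simp only [@typeCount_sum S T _ _ (fun a b => Classical.propDecidable _) (fun a b => Classical.propDecidable _) (fun a b => Classical.propDecidable _), c3, c4, c5, c6]
  rw [tsplit]
  ring


lemma AgF_split (τ : Equiv.Perm S) (p : S → Prop) [DecidablePred p]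
    (hp : ∀ y, p y ↔ p (τ y)) (hq : ∀ y, ¬ p y ↔ ¬ p (τ y))
    (w : Bool → Bool → ℝ) (z : ℝ) (hz : 0 < z) :
    AgF τ w z = AgF (τ.subtypePerm (fun y => (hp y).symm)) w z * AgF (τ.subtypePerm (p := fun y => ¬ p y) (fun y => (hq y).symm)) w z := by
  have hconj : (Equiv.sumCompl p).trans (Equiv.trans (τ : S ≃ S) (Equiv.sumCompl p).symm)
      = Equiv.sumCongr (τ.subtypePerm (fun y => (hp y).symm)) (τ.subtypePerm (p := fun y => ¬ p y) (fun y => (hq y).symm)) := by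
    apply Equiv.ext
    rintro (a | a)
    · simp only [Equiv.trans_apply, Equiv.sumCompl_apply_inl, Equiv.sumCongr_apply,
        Sum.map_inl]
      rw [Equiv.sumCompl_symm_apply_of_pos ((hp a.1).1 a.2)]
      rfl
    · simp only [Equiv.trans_apply, Equiv.sumCompl_apply_inr, Equiv.sumCongr_apply,
        Sum.map_inr]
      rw [Equiv.sumCompl_symm_apply_of_neg ((hq a.1).1 a.2)]
      rfl
  rw [← AgF_conj (Equiv.sumCompl p) τ w z, hconj, AgF_sumCongr _ _ w z hz]

lemma finRotate_val (n : ℕ) (i : Fin n) : ((finRotate n) i : ℕ) = ((i : ℕ) + 1) % n := by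
  match n, i with
  | n + 1, i =>
    rw [finRotate_succ_apply, Fin.val_add]
    have : ((1 : Fin (n+1)) : ℕ) = 1 % (n + 1) := by
      rcases n with _ | n
      · rfl
      · rfl
    rw [this]
    simp [Nat.add_mod]

lemma AgF_cycle (τ : Equiv.Perm S) (x : S) [DecidablePred (τ.SameCycle x)]
    (hp : ∀ y, τ.SameCycle x y ↔ τ.SameCycle x (τ y))
    (w : Bool → Bool → ℝ) (z : ℝ) :
    AgF (τ.subtypePerm (fun y => (hp y).symm)) w z
      = aGF ((Finset.univ.filter (τ.SameCycle x)).card) w z := by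
  set s : Finset S := Finset.univ.filter (τ.SameCycle x) with hs
  have hxs : x ∈ s := Finset.mem_filter.2 ⟨Finset.mem_univ _, Equiv.Perm.SameCycle.refl _ _⟩
  have hmem : ∀ y, y ∈ s ↔ τ.SameCycle x y := by
    intro y; simp [hs]
  have hcyc : τ.IsCycleOn ↑s := by
    constructor
    · refine ⟨fun y hy => ?_, fun a _ b _ hab => τ.injective hab, fun y hy => ?_⟩
      · rw [Finset.mem_coe, hmem] at hy ⊢
        exact (hp y).1 hy
      · rw [Finset.mem_coe, hmem] at hy
        refine ⟨τ.symm y, ?_, by simp⟩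
        rw [Finset.mem_coe, hmem]
        have := (hp (τ.symm y)).2
        rw [Equiv.apply_symm_apply] at this
        exact this hy
    · intro a ha b hb
      rw [Finset.mem_coe, hmem] at ha hb
      exact ha.symm.trans hb
  have hm : 0 < s.card := Finset.card_pos.2 ⟨x, hxs⟩
  -- the equivalence `Fin s.card ≃ {y // τ.SameCycle x y}`
  have hbij : Function.Bijective (fun i : Fin s.card =>
      (⟨(τ ^ (i : ℕ)) x, ⟨((i : ℕ) : ℤ), by rw [zpow_natCast]⟩⟩ : {y // τ.SameCycle x y})) := by
    constructor
    · intro i j hij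
      have h1 : (τ ^ (i : ℕ)) x = (τ ^ (j : ℕ)) x := congrArg Subtype.val hij
      have h2 := (hcyc.pow_apply_eq_pow_apply hxs).1 h1
      have : (i : ℕ) % s.card = (j : ℕ) % s.card := h2
      rw [Nat.mod_eq_of_lt i.2, Nat.mod_eq_of_lt j.2] at this
      exact Fin.ext this
    · rintro ⟨y, hy⟩
      have hys : y ∈ s := (hmem y).2 hy
      obtain ⟨n, hn, hny⟩ := hcyc.exists_pow_eq hxs hys
      exact ⟨⟨n, hn⟩, Subtype.ext hny⟩
  set e : Fin s.card ≃ {y // τ.SameCycle x y} := Equiv.ofBijective _ hbij with he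
  have heapp : ∀ i : Fin s.card, (e i : S) = (τ ^ (i : ℕ)) x := fun i => rfl
  have hcomm : ∀ i : Fin s.card, (τ.subtypePerm (fun y => (hp y).symm)) (e i) = e ((finRotate s.card) i) := by
    intro i
    apply Subtype.ext
    show τ ((e i : S)) = (e ((finRotate s.card) i) : S)
    rw [heapp, heapp, finRotate_val]
    have h1 : τ ((τ ^ (i : ℕ)) x) = (τ ^ ((i : ℕ) + 1)) x := by
      rw [pow_succ']
      rfl
    rw [h1]
    apply (hcyc.pow_apply_eq_pow_apply hxs).2
    exact (Nat.mod_mod_of_dvd _ dvd_rfl).symm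
  have hfr : e.trans (Equiv.trans ((τ.subtypePerm (fun y => (hp y).symm)) : _ ≃ _) e.symm) = finRotate s.card := by
    apply Equiv.ext
    intro i
    simp only [Equiv.trans_apply]
    rw [hcomm i, Equiv.symm_apply_apply]
  rw [← AgF_conj e (τ.subtypePerm (fun y => (hp y).symm)) w z, hfr, aGF]


end lemmas

noncomputable def orbSize {S : Type*} (τ : Equiv.Perm S) (x : S) : ℕ :=
  Nat.card {y // τ.SameCycle x y}

noncomputable def orbCnt {S : Type*} (τ : Equiv.Perm S) (ℓ : ℕ) : ℕ :=
  Nat.card {x // orbSize τ x = ℓ}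

section lemmasB
variable {S : Type*} [Fintype S]

lemma card_filter_eq_nat_card {p : S → Prop} [DecidablePred p] :
    (Finset.univ.filter p).card = Nat.card {y // p y} := by
  rw [Nat.card_eq_fintype_card, Fintype.card_subtype]

lemma sameCycle_subtypePerm {S' : Type*} (τ : Equiv.Perm S') {p : S' → Prop} (hp : ∀ y, p y ↔ p (τ y))
    (a b : {y // p y}) : (τ.subtypePerm (fun y => (hp y).symm)).SameCycle a b ↔ τ.SameCycle a.1 b.1 := by
  constructor
  · rintro ⟨k, hk⟩
    refine ⟨k, ?_⟩
    rw [Equiv.Perm.subtypePerm_zpow] at hk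
    exact congrArg Subtype.val hk
  · rintro ⟨k, hk⟩
    refine ⟨k, ?_⟩
    rw [Equiv.Perm.subtypePerm_zpow]
    exact Subtype.ext hk

lemma orbSize_le (τ : Equiv.Perm S) (x : S) : orbSize τ x ≤ Fintype.card S := by
  rw [← Nat.card_eq_fintype_card]
  exact Nat.card_le_card_of_injective Subtype.val Subtype.val_injective

lemma orbSize_pos (τ : Equiv.Perm S) (x : S) : 0 < orbSize τ x := by
  have : Nonempty {y // τ.SameCycle x y} := ⟨⟨x, Equiv.Perm.SameCycle.refl _ _⟩⟩
  exact Nat.card_pos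

lemma orbSize_congr {S' : Type*} (τ : Equiv.Perm S') {x y : S'} (h : τ.SameCycle x y) :
    orbSize τ y = orbSize τ x := by
  exact Nat.card_congr (Equiv.subtypeEquivRight fun u =>
    ⟨fun hyu => h.trans hyu, fun hxu => h.symm.trans hxu⟩)

lemma orbSize_subtype {S' : Type*} (τ : Equiv.Perm S') {p : S' → Prop} (hp : ∀ y, p y ↔ p (τ y))
    (horb : ∀ a b : S', p a → τ.SameCycle a b → p b) (a : {y // p y}) :
    orbSize (τ.subtypePerm (fun y => (hp y).symm)) a = orbSize τ a.1 := by
  refine Nat.card_congr ⟨fun b => ⟨b.1.1, (sameCycle_subtypePerm τ hp a b.1).1 b.2⟩,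
    fun c => ⟨⟨c.1, horb a.1 c.1 a.2 c.2⟩, (sameCycle_subtypePerm τ hp a _).2 c.2⟩, ?_, ?_⟩
  · intro b
    apply Subtype.ext
    apply Subtype.ext
    rfl
  · intro c
    apply Subtype.ext
    rfl

lemma nat_card_split (P p : S → Prop) :
    Nat.card {y // P y} = Nat.card {y // P y ∧ p y} + Nat.card {y // P y ∧ ¬ p y} := by
  classical
  rw [Nat.card_eq_fintype_card, Nat.card_eq_fintype_card, Nat.card_eq_fintype_card,
      Fintype.card_subtype, Fintype.card_subtype, Fintype.card_subtype,
      ← Finset.filter_filter, ← Finset.filter_filter]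
  exact (Finset.card_filter_add_card_filter_not _).symm

lemma orbCnt_split (τ : Equiv.Perm S) (x : S) (ℓ : ℕ)
    (hq : ∀ y, ¬ τ.SameCycle x y ↔ ¬ τ.SameCycle x (τ y)) :
    orbCnt τ ℓ = orbCnt (τ.subtypePerm (p := fun y => ¬ τ.SameCycle x y) (fun y => (hq y).symm)) ℓ + (if ℓ = orbSize τ x then orbSize τ x else 0) := by
  have horb : ∀ a c : S, ¬τ.SameCycle x a → τ.SameCycle a c → ¬τ.SameCycle x c :=
    fun a c ha hac hc => ha (hc.trans hac.symm)
  have hsplit := nat_card_split (fun y : S => orbSize τ y = ℓ) (fun y => τ.SameCycle x y)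
  have hA : Nat.card {y : S // orbSize τ y = ℓ ∧ τ.SameCycle x y}
      = (if ℓ = orbSize τ x then orbSize τ x else 0) := by
    by_cases hℓ : ℓ = orbSize τ x
    · rw [if_pos hℓ]
      subst hℓ
      have h2 : Nat.card {y : S // orbSize τ y = orbSize τ x ∧ τ.SameCycle x y}
          = Nat.card {y : S // τ.SameCycle x y} :=
        Nat.card_congr (Equiv.subtypeEquivRight fun y =>
          ⟨fun h => h.2, fun h => ⟨orbSize_congr τ h, h⟩⟩)
      rw [h2]
      rfl
    · rw [if_neg hℓ]
      have : IsEmpty {y : S // orbSize τ y = ℓ ∧ τ.SameCycle x y} := by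
        refine ⟨fun y => hℓ ?_⟩
        rw [← y.2.1, orbSize_congr τ y.2.2]
      exact Nat.card_of_isEmpty
  have hB : Nat.card {y : S // orbSize τ y = ℓ ∧ ¬ τ.SameCycle x y}
      = orbCnt (τ.subtypePerm (p := fun y => ¬ τ.SameCycle x y) (fun y => (hq y).symm)) ℓ := by
    refine Nat.card_congr ⟨fun y => ⟨⟨y.1, y.2.2⟩, ?_⟩, fun b => ⟨b.1.1, ?_, b.1.2⟩, ?_, ?_⟩
    · rw [orbSize_subtype τ hq horb]
      exact y.2.1
    · rw [← orbSize_subtype τ hq horb]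
      exact b.2
    · intro y
      apply Subtype.ext
      rfl
    · intro b
      apply Subtype.ext
      apply Subtype.ext
      rfl
  rw [orbCnt, hsplit, hA, hB]
  ring

lemma orbCnt_eq_zero (τ : Equiv.Perm S) (ℓ : ℕ) (h : Fintype.card S < ℓ) :
    orbCnt τ ℓ = 0 := by
  have : IsEmpty {y : S // orbSize τ y = ℓ} := by
    refine ⟨fun y => ?_⟩
    have := orbSize_le τ y.1
    rw [y.2] at this
    omega
  exact Nat.card_of_isEmpty

open Classical in
lemma cycleCount_eq_orbCnt (τ : Equiv.Perm S) (ℓ : ℕ) :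
    cycleCount τ ℓ = orbCnt τ ℓ / ℓ := by
  unfold cycleCount
  congr 1
  rw [card_filter_eq_nat_card, orbCnt]
  refine Nat.card_congr (Equiv.subtypeEquivRight fun y => ?_)
  rw [card_filter_eq_nat_card, orbSize]

end lemmasB
section MainProof
open Classical

lemma hamming_of_isEmpty {S : Type*} [Fintype S] [DecidableEq S] [IsEmpty S] (f g : S → Bool) :
    hamming f g = 0 := by
  simp [hamming]

lemma typeCount_of_isEmpty {S : Type*} [Fintype S] [DecidableEq S] [IsEmpty S]
    (f g : S → Bool) (i j : Bool) : typeCount f g i j = 0 := by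
  simp [typeCount]

lemma AgF_of_isEmpty {S : Type*} [Fintype S] [IsEmpty S] (τ : Equiv.Perm S)
    (w : Bool → Bool → ℝ) (z : ℝ) : AgF τ w z = 1 := by
  have h1 : AgF τ w z = ∑ _g : S → Bool, ∑ _h : S → Bool, (1 : ℝ) := by
    unfold AgF
    refine Finset.sum_congr rfl fun g _ => Finset.sum_congr rfl fun h _ => ?_
    simp only [hamming_of_isEmpty, typeCount_of_isEmpty, pow_zero, Finset.prod_const_one]
    norm_num
  rw [h1]
  simp

lemma aux_empty {S : Type*} [Fintype S] (τ : Equiv.Perm S) (hS : Fintype.card S = 0)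
    (w : Bool → Bool → ℝ) (z : ℝ) :
    ((∑ ℓ ∈ Finset.range (Fintype.card S + 1), ℓ * cycleCount τ ℓ) = Fintype.card S) ∧
    AgF τ w z = ∏ ℓ ∈ Finset.range (Fintype.card S + 1), aGF ℓ w z ^ cycleCount τ ℓ := by
  have hE : IsEmpty S := Fintype.card_eq_zero_iff.1 hS
  have hcc0 : cycleCount τ 0 = 0 := by
    unfold cycleCount
    exact Nat.div_zero _
  constructor
  · rw [hS]
    simp
  · rw [hS, AgF_of_isEmpty]
    rw [Finset.prod_range_one, hcc0, pow_zero]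

lemma aux_main (n : ℕ) : ∀ {S : Type u} [Fintype S] (τ : Equiv.Perm S),
    Fintype.card S ≤ n → ∀ (w : Bool → Bool → ℝ), (∀ i j, 0 < w i j) → ∀ (z : ℝ), 0 < z →
    ((∑ ℓ ∈ Finset.range (Fintype.card S + 1), ℓ * cycleCount τ ℓ) = Fintype.card S) ∧
    AgF τ w z = ∏ ℓ ∈ Finset.range (Fintype.card S + 1), aGF ℓ w z ^ cycleCount τ ℓ := by
  induction n with
  | zero =>
    intro S _ τ hn w hw z hz
    exact aux_empty τ (Nat.le_zero.1 hn) w z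
  | succ n ih =>
    intro S _ τ hn w hw z hz
    by_cases hS : Fintype.card S = 0
    · exact aux_empty τ hS w z
    have hne : Nonempty S := Fintype.card_pos_iff.1 (Nat.pos_of_ne_zero hS)
    obtain ⟨x⟩ := hne
    have hp : ∀ y, τ.SameCycle x y ↔ τ.SameCycle x (τ y) :=
      fun y => (Equiv.Perm.sameCycle_apply_right).symm
    have hq : ∀ y, ¬ τ.SameCycle x y ↔ ¬ τ.SameCycle x (τ y) := fun y => not_congr (hp y)
    have hm1 : 1 ≤ orbSize τ x := orbSize_pos τ x
    have hmle : orbSize τ x ≤ Fintype.card S := orbSize_le τ x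
    have hcard1 : Fintype.card {y // τ.SameCycle x y} = orbSize τ x := by
      rw [← Nat.card_eq_fintype_card]
      rfl
    have hcard2 : Fintype.card {y // ¬ τ.SameCycle x y} = Fintype.card S - orbSize τ x := by
      rw [Fintype.card_subtype_compl, hcard1]
    have hS2n : Fintype.card {y // ¬ τ.SameCycle x y} ≤ n := by omega
    obtain ⟨ihsum, ihprod⟩ := ih (τ.subtypePerm (p := fun y => ¬ τ.SameCycle x y) (fun y => (hq y).symm)) hS2n w hw z hz
    have hcc : ∀ ℓ, cycleCount τ ℓ
        = cycleCount (τ.subtypePerm (p := fun y => ¬ τ.SameCycle x y) (fun y => (hq y).symm)) ℓ + (if ℓ = orbSize τ x then 1 else 0) := by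
      intro ℓ
      rw [cycleCount_eq_orbCnt, cycleCount_eq_orbCnt, orbCnt_split τ x ℓ hq]
      by_cases hℓm : ℓ = orbSize τ x
      · rw [if_pos hℓm, if_pos hℓm]
        subst hℓm
        rw [Nat.add_div_right _ hm1]
      · rw [if_neg hℓm, if_neg hℓm, Nat.add_zero, Nat.add_zero]
    have hccz : ∀ ℓ, Fintype.card {y // ¬ τ.SameCycle x y} + 1 ≤ ℓ →
        cycleCount (τ.subtypePerm (p := fun y => ¬ τ.SameCycle x y) (fun y => (hq y).symm)) ℓ = 0 := by
      intro ℓ hℓ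
      rw [cycleCount_eq_orbCnt, orbCnt_eq_zero _ _ (by omega), Nat.zero_div]
    have hshrink_sum :
        (∑ ℓ ∈ Finset.range (Fintype.card S + 1), ℓ * cycleCount (τ.subtypePerm (p := fun y => ¬ τ.SameCycle x y) (fun y => (hq y).symm)) ℓ)
        = ∑ ℓ ∈ Finset.range (Fintype.card {y // ¬ τ.SameCycle x y} + 1),
            ℓ * cycleCount (τ.subtypePerm (p := fun y => ¬ τ.SameCycle x y) (fun y => (hq y).symm)) ℓ := by
      refine (Finset.sum_subset (Finset.range_subset_range.2 (by omega)) ?_).symm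
      intro ℓ _ hℓ
      rw [Finset.mem_range, not_lt] at hℓ
      rw [hccz ℓ hℓ, Nat.mul_zero]
    have hshrink_prod :
        (∏ ℓ ∈ Finset.range (Fintype.card S + 1), aGF ℓ w z ^ cycleCount (τ.subtypePerm (p := fun y => ¬ τ.SameCycle x y) (fun y => (hq y).symm)) ℓ)
        = ∏ ℓ ∈ Finset.range (Fintype.card {y // ¬ τ.SameCycle x y} + 1),
            aGF ℓ w z ^ cycleCount (τ.subtypePerm (p := fun y => ¬ τ.SameCycle x y) (fun y => (hq y).symm)) ℓ := by
      refine (Finset.prod_subset (Finset.range_subset_range.2 (by omega)) ?_).symm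
      intro ℓ _ hℓ
      rw [Finset.mem_range, not_lt] at hℓ
      rw [hccz ℓ hℓ, pow_zero]
    have hmmem : orbSize τ x ∈ Finset.range (Fintype.card S + 1) := by
      rw [Finset.mem_range]
      omega
    constructor
    · calc (∑ ℓ ∈ Finset.range (Fintype.card S + 1), ℓ * cycleCount τ ℓ)
          = ∑ ℓ ∈ Finset.range (Fintype.card S + 1),
              (ℓ * cycleCount (τ.subtypePerm (p := fun y => ¬ τ.SameCycle x y) (fun y => (hq y).symm)) ℓ + if ℓ = orbSize τ x then ℓ else 0) := by
            refine Finset.sum_congr rfl fun ℓ _ => ?_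
            rw [hcc ℓ, Nat.mul_add, mul_ite, Nat.mul_one, Nat.mul_zero]
        _ = (∑ ℓ ∈ Finset.range (Fintype.card S + 1), ℓ * cycleCount (τ.subtypePerm (p := fun y => ¬ τ.SameCycle x y) (fun y => (hq y).symm)) ℓ)
              + orbSize τ x := by
            rw [Finset.sum_add_distrib, Finset.sum_ite_eq' _ (orbSize τ x) (fun ℓ => ℓ),
              if_pos hmmem]
        _ = Fintype.card S := by
            rw [hshrink_sum, ihsum]
            omega
    · have hsplit := AgF_split τ (τ.SameCycle x) hp hq w z hz
      have hfm : (Finset.univ.filter (τ.SameCycle x)).card = orbSize τ x :=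
        card_filter_eq_nat_card
      have hcyc := AgF_cycle τ x hp w z
      rw [hfm] at hcyc
      calc AgF τ w z = aGF (orbSize τ x) w z * AgF (τ.subtypePerm (p := fun y => ¬ τ.SameCycle x y) (fun y => (hq y).symm)) w z := by
            rw [hsplit, hcyc]
        _ = ∏ ℓ ∈ Finset.range (Fintype.card S + 1), aGF ℓ w z ^ cycleCount τ ℓ := by
            rw [ihprod, ← hshrink_prod]
            have expand : ∀ ℓ, aGF ℓ w z ^ cycleCount τ ℓ
                = aGF ℓ w z ^ cycleCount (τ.subtypePerm (p := fun y => ¬ τ.SameCycle x y) (fun y => (hq y).symm)) ℓ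
                  * (if ℓ = orbSize τ x then aGF ℓ w z else 1) := by
              intro ℓ
              rw [hcc ℓ, pow_add]
              congr 1
              split_ifs with h
              · rw [pow_one]
              · rw [pow_zero]
            rw [Finset.prod_congr rfl (fun ℓ _ => expand ℓ), Finset.prod_mul_distrib,
              Finset.prod_ite_eq' _ (orbSize τ x) (fun ℓ => aGF ℓ w z), if_pos hmmem, mul_comm]
  
end MainProof

/-- the cycle decomposition of the generating function `A_{S,τ}`. -/
theorem AgF_cycle_decomposition {S : Type*} [Fintype S] (τ : Equiv.Perm S)
    (w : Bool → Bool → ℝ) (hw : ∀ i j, 0 < w i j) (z : ℝ) (hz : 0 < z) :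
    (∑ ℓ ∈ Finset.range (Fintype.card S + 1), ℓ * cycleCount τ ℓ) = Fintype.card S ∧
    AgF τ w z = ∏ ℓ ∈ Finset.range (Fintype.card S + 1), aGF ℓ w z ^ cycleCount τ ℓ :=
  aux_main (Fintype.card S) τ le_rfl w hw z hz
end

section
/- Let g_a and g_b be graphs on the vertex set [n], and let g_a ∧ g_b denote their intersection graph, the graph whose edge indicator is the pointwise product of those of g_a and g_b. If π is a permutation of [n] that is an automorphism of g_a ∧ g_b, i.e. (g_a ∧ g_b)(l(π)(e)) = (g_a ∧ g_b)(e) for every vertex pair e, then δ(l(π); g_a, g_b) ≤ 0, i.e. Δ(g_a∘l(π), g_b) ≤ Δ(g_a, g_b). -/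
open Finset

lemma ham_plus_two_inter {S : Type*} [Fintype S] [DecidableEq S] (h g : S → Bool) :
    hamming h g + 2 * (Finset.univ.filter fun e => h e = true ∧ g e = true).card
      = (Finset.univ.filter fun e => h e = true).card
        + (Finset.univ.filter fun e => g e = true).card := by
  unfold hamming
  classical
  rw [Finset.card_filter, Finset.card_filter, Finset.card_filter, Finset.card_filter,
    Finset.mul_sum, ← Finset.sum_add_distrib, ← Finset.sum_add_distrib]
  apply Finset.sum_congr rfl
  intro e _
  cases hh : h e <;> cases hg : g e <;> simp [hh, hg]

/-- automorphisms of the intersection graph have `δ ≤ 0` (Lemma 14). -/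
theorem aut_intersection_delta_nonpos
    (n : ℕ) (ga gb : PairGraph n) (π : Equiv.Perm (Fin n))
    (hAut : ∀ e : VPairs n,
      (ga (pairPerm π e) && gb (pairPerm π e)) = (ga e && gb e)) :
    deltaQ (pairPerm π) ga gb ≤ 0 ∧
    hamming (ga ∘ (pairPerm π)) gb ≤ hamming ga gb := by
  classical
  set τ := pairPerm π with hτ
  have hcardA : (Finset.univ.filter fun e => (ga ∘ τ) e = true).card
      = (Finset.univ.filter fun e => ga e = true).card := by
    rw [Finset.card_filter, Finset.card_filter]
    exact Equiv.sum_comp τ (fun e => if ga e = true then 1 else 0)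
  have hsub : (Finset.univ.filter fun e => ga e = true ∧ gb e = true)
      ⊆ (Finset.univ.filter fun e => (ga ∘ τ) e = true ∧ gb e = true) := by
    intro e he
    simp only [Finset.mem_filter, Finset.mem_univ, true_and] at he ⊢
    have := hAut e
    rw [he.1, he.2] at this
    simp only [Bool.and_true, Bool.true_and] at this
    rcases Bool.and_eq_true _ _ |>.mp this with ⟨h1, _⟩
    exact ⟨h1, he.2⟩
  have hle := Finset.card_le_card hsub
  have e1 := ham_plus_two_inter (ga ∘ τ) gb
  have e2 := ham_plus_two_inter ga gb
  have hham : hamming (ga ∘ τ) gb ≤ hamming ga gb := by omega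
  refine ⟨?_, hham⟩
  unfold deltaQ
  apply div_nonpos_of_nonpos_of_nonneg _ (by norm_num)
  rw [sub_nonpos]
  exact_mod_cast hham
end
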